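/- arXiv:2005.07319 — 4 statements merged into one kernel-verified Lean document; each statement's English description precedes it below -/
import Mathlib

section
/- For integers k_1, ..., k_r with k_r = 1 and real x with |x| < 1, the derivative of the multiple polylogarithm satisfies d/dx Li_{k_1,...,k_{r-1},1}(x) = (1/(1-x)) · Li_{k_1,...,k_{r-1}}(x). -/
open scoped BigOperators

/-- Coefficient of `x^N` in the multiple polylogarithm, with the index list
given in *reverse* order (`k_r` first). -/
noncomputable def mpolylogCoeff : List ℤ → ℕ → ℝ
  | [], 0 => 1
  | [], _ + 1 => 0
  | _ :: _, 0 => 0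
  | k :: ks, (n + 1) =>
      (∑ j ∈ Finset.range (n + 1), mpolylogCoeff ks j) / ((n + 1 : ℕ) : ℝ) ^ k

/-- Multiple polylogarithm `Li_{k_1,…,k_r}(x) = ∑_{0<n_1<⋯<n_r} x^{n_r}/(n_1^{k_1}⋯n_r^{k_r})`,
where the list `ks = [k_1,…,k_r]`. -/
noncomputable def mpolylog (ks : List ℤ) (x : ℝ) : ℝ :=
  ∑' n : ℕ, mpolylogCoeff ks.reverse n * x ^ n

/-- Polynomial growth bound for the coefficients. -/
lemma mpolylogCoeff_bound (L : List ℤ) :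
    ∃ m : ℕ, ∀ n : ℕ, |mpolylogCoeff L n| ≤ ((n : ℝ) + 1) ^ m := by
  induction L with
  | nil =>
    refine ⟨0, fun n => ?_⟩
    match n with
    | 0 => simp [mpolylogCoeff]
    | n + 1 => simp [mpolylogCoeff]
  | cons k ks ih =>
    obtain ⟨m, hm⟩ := ih
    refine ⟨m + 1 + (-k).toNat, fun n => ?_⟩
    match n with
    | 0 =>
      simp only [mpolylogCoeff, abs_zero]
      positivity
    | n + 1 =>
      set z : ℝ := ((n + 1 : ℕ) : ℝ) with hzdef
      have hz1 : (1 : ℝ) ≤ z := by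
        simp only [hzdef]; exact_mod_cast Nat.one_le_iff_ne_zero.2 (Nat.succ_ne_zero n)
      have hz0 : (0 : ℝ) < z := lt_of_lt_of_le one_pos hz1
      have habs : |mpolylogCoeff (k :: ks) (n + 1)|
          = |∑ j ∈ Finset.range (n + 1), mpolylogCoeff ks j| * z ^ (-k) := by
        show |(∑ j ∈ Finset.range (n + 1), mpolylogCoeff ks j) / z ^ k| = _
        rw [abs_div, abs_of_pos (zpow_pos hz0 k), div_eq_mul_inv, ← zpow_neg]
      have hsum : |∑ j ∈ Finset.range (n + 1), mpolylogCoeff ks j| ≤ z ^ (m + 1) := by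
        calc |∑ j ∈ Finset.range (n + 1), mpolylogCoeff ks j|
            ≤ ∑ j ∈ Finset.range (n + 1), |mpolylogCoeff ks j| :=
              Finset.abs_sum_le_sum_abs _ _
          _ ≤ ∑ _j ∈ Finset.range (n + 1), z ^ m := by
              refine Finset.sum_le_sum fun j hj => ?_
              refine le_trans (hm j) (pow_le_pow_left₀ (by positivity) ?_ m)
              have : (j : ℝ) ≤ (n : ℝ) := by
                exact_mod_cast Nat.le_of_lt_succ (Finset.mem_range.1 hj)
              simp only [hzdef]; push_cast; linarith
          _ = (n + 1 : ℕ) * z ^ m := by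
              rw [Finset.sum_const, Finset.card_range, nsmul_eq_mul]
          _ = z ^ (m + 1) := by rw [pow_succ, mul_comm]
      have hzk : z ^ (-k) ≤ z ^ ((-k).toNat : ℕ) := by
        rw [← zpow_natCast z ((-k).toNat)]
        exact zpow_le_zpow_right₀ hz1 (Int.self_le_toNat (-k))
      have : |mpolylogCoeff (k :: ks) (n + 1)| ≤ z ^ (m + 1 + (-k).toNat) := by
        rw [habs, pow_add]
        exact mul_le_mul hsum hzk (by positivity) (by positivity)
      refine le_trans this (pow_le_pow_left₀ (by positivity) ?_ _)
      simp only [hzdef]; push_cast; linarith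

lemma summable_poly_geom (m : ℕ) {r : ℝ} (h0 : 0 ≤ r) (h1 : r < 1) :
    Summable fun n : ℕ => ((n : ℝ) + 1) ^ m * r ^ n := by
  have A : Summable fun n : ℕ => (n : ℝ) ^ m * r ^ n :=
    summable_pow_mul_geometric_of_norm_lt_one m (by rwa [Real.norm_eq_abs, abs_of_nonneg h0])
  have B : Summable fun n : ℕ => r ^ n := summable_geometric_of_lt_one h0 h1
  refine Summable.of_nonneg_of_le (fun n => mul_nonneg (by positivity) (pow_nonneg h0 n))
    (fun n => ?_) ((A.mul_left ((2:ℝ) ^ m)).add (B.mul_left ((2:ℝ) ^ m)))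
  have hr : (0 : ℝ) ≤ r ^ n := by positivity
  have key : ((n : ℝ) + 1) ^ m ≤ 2 ^ m * (n : ℝ) ^ m + 2 ^ m := by
    rcases Nat.eq_zero_or_pos n with h | h
    · subst h
      simp only [Nat.cast_zero, zero_add, one_pow]
      have : (1 : ℝ) ≤ 2 ^ m := one_le_pow₀ one_le_two
      nlinarith [pow_nonneg (le_refl (0:ℝ)) m]
    · have hn1 : (1 : ℝ) ≤ (n : ℝ) := by exact_mod_cast h
      have : ((n : ℝ) + 1) ^ m ≤ (2 * (n : ℝ)) ^ m :=
        pow_le_pow_left₀ (by linarith) (by linarith) m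
      rw [mul_pow] at this
      nlinarith [pow_nonneg (by norm_num : (0:ℝ) ≤ 2) m]
  nlinarith [mul_le_mul_of_nonneg_right key hr]

lemma summable_poly_geom' (m : ℕ) {r : ℝ} (h0 : 0 ≤ r) (h1 : r < 1) :
    Summable fun n : ℕ => ((n : ℝ) + 2) ^ m * r ^ n := by
  refine Summable.of_nonneg_of_le (fun n => mul_nonneg (by positivity) (pow_nonneg h0 n))
    (fun n => ?_) ((summable_poly_geom m h0 h1).mul_left ((2:ℝ) ^ m))
  have h : ((n : ℝ) + 2) ^ m ≤ (2 * ((n : ℝ) + 1)) ^ m :=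
    pow_le_pow_left₀ (by positivity) (by linarith [Nat.cast_nonneg (α := ℝ) n]) m
  rw [mul_pow] at h
  have hr : (0 : ℝ) ≤ r ^ n := by positivity
  nlinarith [mul_le_mul_of_nonneg_right h hr, pow_nonneg (by norm_num : (0:ℝ) ≤ 2) m,
    pow_nonneg (by positivity : (0:ℝ) ≤ (n : ℝ) + 1) m]

/-- For `k_r = 1`, `d/dx Li_{k_1,…,k_{r-1},1}(x) = Li_{k_1,…,k_{r-1}}(x)/(1-x)` for `|x| < 1`.
Here `ks = [k_1,…,k_{r-1}]`. -/
theorem mpolylog_hasDerivAt_last_one (ks : List ℤ) (x : ℝ) (hx : |x| < 1) :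
    HasDerivAt (mpolylog (ks ++ [1])) (mpolylog ks x / (1 - x)) x := by
  classical
  set r : ℝ := (|x| + 1) / 2 with hrdef
  have hxr : |x| < r := by simp only [hrdef]; linarith
  have hr1 : r < 1 := by simp only [hrdef]; linarith
  have hr0 : 0 ≤ r := by positivity
  set c : ℕ → ℝ := mpolylogCoeff (1 :: ks.reverse) with hcdef
  set a : ℕ → ℝ := mpolylogCoeff ks.reverse with hadef
  obtain ⟨m, hm⟩ := mpolylogCoeff_bound (1 :: ks.reverse)
  obtain ⟨ma, hma⟩ := mpolylogCoeff_bound ks.reverse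
  -- the function series and its termwise derivatives
  set g : ℕ → ℝ → ℝ := fun n y => c n * y ^ n with hgdef
  set g' : ℕ → ℝ → ℝ := fun n y => c n * (n * y ^ (n - 1)) with hg'def
  set u : ℕ → ℝ := fun n => ((n : ℝ) + 1) ^ (m + 1) * r ^ (n - 1) with hudef
  have hu : Summable u := by
    rw [← summable_nat_add_iff 1]
    have : (fun n : ℕ => u (n + 1)) = fun n : ℕ => ((n : ℝ) + 2) ^ (m + 1) * r ^ n := by
      funext n
      simp only [hudef, Nat.add_sub_cancel]
      push_cast; ring
    rw [this]
    exact summable_poly_geom' (m + 1) hr0 hr1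
  have hg : ∀ n : ℕ, ∀ y : ℝ, y ∈ Set.Ioo (-r) r → HasDerivAt (g n) (g' n y) y := by
    intro n y _
    exact (hasDerivAt_pow n y).const_mul (c n)
  have hg' : ∀ n : ℕ, ∀ y : ℝ, y ∈ Set.Ioo (-r) r → ‖g' n y‖ ≤ u n := by
    intro n y hy
    have hyr : |y| ≤ r := le_of_lt (abs_lt.2 ⟨hy.1, hy.2⟩)
    have h1 : ‖g' n y‖ = |c n| * ((n : ℝ) * |y| ^ (n - 1)) := by
      simp [hg'def, abs_mul, abs_pow, abs_of_nonneg (Nat.cast_nonneg (α := ℝ) n)]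
    rw [h1, hudef]
    have h2 : |c n| ≤ ((n : ℝ) + 1) ^ m := hm n
    have h3 : |y| ^ (n - 1) ≤ r ^ (n - 1) := pow_le_pow_left₀ (abs_nonneg y) hyr _
    have h4 : (n : ℝ) * |y| ^ (n - 1) ≤ ((n : ℝ) + 1) * r ^ (n - 1) := by
      have : (n : ℝ) * |y| ^ (n - 1) ≤ (n : ℝ) * r ^ (n - 1) :=
        mul_le_mul_of_nonneg_left h3 (Nat.cast_nonneg n)
      refine le_trans this (mul_le_mul_of_nonneg_right (by linarith) (by positivity))
    calc |c n| * ((n : ℝ) * |y| ^ (n - 1))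
        ≤ ((n : ℝ) + 1) ^ m * (((n : ℝ) + 1) * r ^ (n - 1)) :=
          mul_le_mul h2 h4 (by positivity) (by positivity)
      _ = ((n : ℝ) + 1) ^ (m + 1) * r ^ (n - 1) := by ring
  have hx0mem : (0 : ℝ) ∈ Set.Ioo (-r) r := by
    constructor <;> [linarith [abs_nonneg x]; linarith [abs_nonneg x]]
  have hxmem : x ∈ Set.Ioo (-r) r := abs_lt.1 hxr
  have hg0 : Summable fun n => g n (0 : ℝ) := by
    refine (summable_of_ne_finset_zero (s := {0}) fun n hn => ?_)
    have : n ≠ 0 := by simpa using hn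
    simp [hgdef, zero_pow this]
  have H := hasDerivAt_tsum_of_isPreconnected hu isOpen_Ioo (convex_Ioo (-r) r).isPreconnected
    hg hg' hx0mem hg0 hxmem
  -- identify the function
  have hfun : (fun z => ∑' n, g n z) = mpolylog (ks ++ [1]) := by
    funext z
    simp only [mpolylog, hgdef, hcdef, List.reverse_append, List.reverse_cons,
      List.reverse_nil, List.nil_append, List.singleton_append]
  rw [hfun] at H
  -- identify the derivative value
  have hsummg' : Summable fun n => g' n x := by
    refine Summable.of_norm_bounded hu fun n => hg' n x hxmem
  have hsa : Summable fun n : ℕ => ‖a n * x ^ n‖ := by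
    refine Summable.of_nonneg_of_le (fun n => norm_nonneg _)
      (fun n => ?_) (summable_poly_geom ma (abs_nonneg x) hx)
    rw [Real.norm_eq_abs, abs_mul, abs_pow]
    exact mul_le_mul_of_nonneg_right (hma n) (by positivity)
  have hsx : Summable fun n : ℕ => ‖x ^ n‖ := by
    simpa [Real.norm_eq_abs, abs_pow] using
      summable_geometric_of_lt_one (abs_nonneg x) hx
  have hval : (∑' n, g' n x) = mpolylog ks x / (1 - x) := by
    have h0 : (∑' n, g' n x) = g' 0 x + ∑' n, g' (n + 1) x := Summable.tsum_eq_zero_add hsummg'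
    have hg'0 : g' 0 x = 0 := by simp [hg'def]
    have hterm : ∀ n : ℕ, g' (n + 1) x
        = ∑ k ∈ Finset.range (n + 1), (a k * x ^ k) * x ^ (n - k) := by
      intro n
      have hc : c (n + 1) = (∑ j ∈ Finset.range (n + 1), a j) / ((n + 1 : ℕ) : ℝ) := by
        simp only [hcdef, hadef]
        show (∑ j ∈ Finset.range (n + 1), mpolylogCoeff ks.reverse j)
            / ((n + 1 : ℕ) : ℝ) ^ (1 : ℤ) = _
        rw [zpow_one]
      have hne : ((n + 1 : ℕ) : ℝ) ≠ 0 := Nat.cast_ne_zero.2 (Nat.succ_ne_zero n)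
      have h1 : g' (n + 1) x = (∑ j ∈ Finset.range (n + 1), a j) * x ^ n := by
        simp only [hg'def, hc, Nat.add_sub_cancel]
        push_cast
        field_simp
      rw [h1, Finset.sum_mul]
      refine Finset.sum_congr rfl fun k hk => ?_
      have hkn : k ≤ n := Nat.le_of_lt_succ (Finset.mem_range.1 hk)
      rw [mul_assoc, ← pow_add, Nat.add_sub_cancel' hkn]
    calc (∑' n, g' n x) = ∑' n, g' (n + 1) x := by rw [h0, hg'0, zero_add]
      _ = ∑' n, ∑ k ∈ Finset.range (n + 1), (a k * x ^ k) * x ^ (n - k) := by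
          exact tsum_congr hterm
      _ = (∑' n, a n * x ^ n) * ∑' n, x ^ n :=
          (tsum_mul_tsum_eq_tsum_sum_range_of_summable_norm hsa hsx).symm
      _ = mpolylog ks x / (1 - x) := by
          rw [tsum_geometric_of_norm_lt_one (by rwa [Real.norm_eq_abs]), div_eq_mul_inv]
          rfl
  rwa [hval] at H
end

section
/- For real x with |x| < 1, Li_{1,1}(x) = (1/2)(log(1-x))^2, where Li_{1,1}(x) = ∑_{0 < n_1 < n_2} x^{n_2}/(n_1 n_2). -/
open scoped BigOperators

lemma coeff_nil_sum (n : ℕ) : ∑ j ∈ Finset.range (n + 1), mpolylogCoeff [] j = 1 := by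
  induction n with
  | zero => simp [mpolylogCoeff]
  | succ n ih => rw [Finset.sum_range_succ, ih]; simp [mpolylogCoeff]

lemma coeff_one (n : ℕ) : mpolylogCoeff [1] (n + 1) = 1 / ((n : ℝ) + 1) := by
  show (∑ j ∈ Finset.range (n + 1), mpolylogCoeff [] j) / ((n + 1 : ℕ) : ℝ) ^ (1:ℤ) = _
  rw [coeff_nil_sum, zpow_one]; push_cast; ring

lemma coeff_one_one (n : ℕ) :
    mpolylogCoeff [1, 1] (n + 1) = (∑ j ∈ Finset.range n, 1 / ((j : ℝ) + 1)) / ((n : ℝ) + 1) := by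
  show (∑ j ∈ Finset.range (n + 1), mpolylogCoeff [1] j) / ((n + 1 : ℕ) : ℝ) ^ (1:ℤ) = _
  rw [Finset.sum_range_succ']
  simp only [coeff_one]
  have h0 : mpolylogCoeff [1] 0 = 0 := rfl
  rw [h0, zpow_one]; push_cast; ring

lemma key (n : ℕ) :
    ∑ k ∈ Finset.range (n + 1), mpolylogCoeff [1] k * mpolylogCoeff [1] (n - k)
      = 2 * mpolylogCoeff [1, 1] n := by
  cases n with
  | zero => simp [mpolylogCoeff]
  | succ m =>
    have h0 : mpolylogCoeff [1] 0 = 0 := rfl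
    rw [Finset.sum_range_succ', coeff_one_one]
    rw [h0]
    simp only [zero_mul, mul_zero, add_zero]
    rw [Finset.sum_range_succ]
    have hms : m + 1 - (m + 1) = 0 := by omega
    rw [hms, h0, mul_zero, add_zero]
    have hcongr : ∀ k ∈ Finset.range m,
        mpolylogCoeff [1] (k + 1) * mpolylogCoeff [1] (m + 1 - (k + 1))
          = 1 / ((m : ℝ) + 1) * (1 / ((k : ℝ) + 1) + 1 / ((m - 1 - k : ℕ) + 1 : ℝ)) := by
      intro k hk
      rw [Finset.mem_range] at hk
      have h1 : m + 1 - (k + 1) = (m - 1 - k) + 1 := by omega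
      rw [h1, coeff_one, coeff_one]
      have h2 : ((m - 1 - k : ℕ) : ℝ) = (m : ℝ) - 1 - k := by
        push_cast [Nat.cast_sub (by omega : k ≤ m - 1), Nat.cast_sub (by omega : 1 ≤ m)]; ring
      rw [h2]
      have ha : (k : ℝ) + 1 ≠ 0 := by positivity
      have hb : (m : ℝ) - 1 - k + 1 ≠ 0 := by
        have : (k : ℝ) < m := by exact_mod_cast hk
        nlinarith
      have hm : (m : ℝ) + 1 ≠ 0 := by positivity
      field_simp
      ring
    rw [Finset.sum_congr rfl hcongr, ← Finset.mul_sum, Finset.sum_add_distrib]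
    have hrefl : ∑ k ∈ Finset.range m, (1 : ℝ) / ((m - 1 - k : ℕ) + 1 : ℝ)
        = ∑ k ∈ Finset.range m, 1 / ((k : ℝ) + 1) := by
      exact Finset.sum_range_reflect (fun j => (1 : ℝ) / ((j : ℝ) + 1)) m
    rw [hrefl]
    field_simp
    ring

/-- For `|x| < 1`, `Li_{1,1}(x) = (1/2)(log(1-x))^2`. -/
theorem mpolylog_one_one (x : ℝ) (hx : |x| < 1) :
    mpolylog [1, 1] x = (1 / 2) * (Real.log (1 - x)) ^ 2 := by
  set f : ℕ → ℝ := fun n => mpolylogCoeff [1] n * x ^ n with hfdef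
  have h00 : mpolylogCoeff [1] 0 = 0 := rfl
  have hf1 : HasSum (fun n => f (n + 1)) (-Real.log (1 - x)) := by
    have h := Real.hasSum_pow_div_log_of_abs_lt_one hx
    convert h using 2 with n
    simp only [hfdef, coeff_one]
    ring
  have hf : HasSum f (-Real.log (1 - x)) := by
    have h := (hasSum_nat_add_iff 1).mp hf1
    simpa [hfdef, h00] using h
  have hnorm : Summable fun n => ‖f n‖ := by
    apply Summable.of_nonneg_of_le (fun n => norm_nonneg _) (fun n => ?_)
      (summable_geometric_of_lt_one (abs_nonneg x) hx)
    cases n with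
    | zero => simp [hfdef, h00]
    | succ n =>
      simp only [hfdef, coeff_one, norm_mul, norm_pow, Real.norm_eq_abs]
      have h1 : |1 / ((n : ℝ) + 1)| ≤ 1 := by
        rw [abs_of_nonneg (by positivity)]
        rw [div_le_one (by positivity)]
        linarith [Nat.cast_nonneg (α := ℝ) n]
      calc |1 / ((n : ℝ) + 1)| * |x| ^ (n + 1) ≤ 1 * |x| ^ (n + 1) :=
            mul_le_mul_of_nonneg_right h1 (by positivity)
        _ = |x| ^ (n + 1) := one_mul _
  have hprod := hasSum_sum_range_mul_of_summable_norm hnorm hnorm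
  rw [hf.tsum_eq] at hprod
  have heach : ∀ n, ∑ k ∈ Finset.range (n + 1), f k * f (n - k)
      = 2 * (mpolylogCoeff [1, 1] n * x ^ n) := by
    intro n
    have hc : ∀ k ∈ Finset.range (n + 1),
        f k * f (n - k) = mpolylogCoeff [1] k * mpolylogCoeff [1] (n - k) * x ^ n := by
      intro k hk
      rw [Finset.mem_range] at hk
      simp only [hfdef]
      have hxx : x ^ k * x ^ (n - k) = x ^ n := by
        rw [← pow_add]; congr 1; omega
      rw [mul_mul_mul_comm, hxx]
    rw [Finset.sum_congr rfl hc, ← Finset.sum_mul, key]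
    ring
  simp only [heach] at hprod
  have hsum : HasSum (fun n => mpolylogCoeff [1, 1] n * x ^ n)
      ((1 / 2) * (Real.log (1 - x)) ^ 2) := by
    have h := hprod.mul_left (1 / 2)
    have e1 : (fun n => mpolylogCoeff [1, 1] n * x ^ n)
        = (fun i => 1 / 2 * (2 * (mpolylogCoeff [1, 1] i * x ^ i))) := by funext n; ring
    have e2 : (1 / 2) * (Real.log (1 - x)) ^ 2
        = 1 / 2 * (-Real.log (1 - x) * -Real.log (1 - x)) := by ring
    rw [e1, e2]; exact h
  have hrev : ([1, 1] : List ℤ).reverse = [1, 1] := rfl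
  rw [mpolylog, hrev, hsum.tsum_eq]
end

section
/- For nonnegative integer n and nonzero real λ, the degenerate multi-poly-Bernoulli polynomial with all r indices equal to 1 coincides with Carlitz's higher-order degenerate Bernoulli polynomial: β_{n,λ}^{(1,1,...,1)}(x) = β_{n,λ}^{(r)}(x). -/
open scoped BigOperators

/-- Degenerate falling factorial `(x)_{n,λ} = x(x-λ)⋯(x-(n-1)λ)`. -/
def degFallFac (x lam : ℝ) : ℕ → ℝ
  | 0 => 1
  | n + 1 => degFallFac x lam n * (x - n * lam)

namespace DMPBAux

/-- Abbreviation for the coefficients of `Li_{1,…,1}` (`r` ones). -/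
noncomputable def pc (r n : ℕ) : ℝ := mpolylogCoeff (List.replicate r 1) n

lemma pc_zero_zero : pc 0 0 = 1 := rfl

lemma pc_zero_succ (n : ℕ) : pc 0 (n + 1) = 0 := rfl

lemma pc_succ_zero (r : ℕ) : pc (r + 1) 0 = 0 := rfl

lemma pc_succ_succ (r n : ℕ) :
    pc (r + 1) (n + 1) = (∑ j ∈ Finset.range (n + 1), pc r j) / ((n : ℝ) + 1) := by
  have h : pc (r + 1) (n + 1)
      = (∑ j ∈ Finset.range (n + 1), mpolylogCoeff (List.replicate r 1) j)
        / ((n + 1 : ℕ) : ℝ) ^ (1 : ℤ) := rfl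
  rw [h, zpow_one]
  push_cast
  rfl

lemma pc_nonneg : ∀ r n, 0 ≤ pc r n := by
  intro r
  induction r with
  | zero =>
    intro n
    cases n with
    | zero => rw [pc_zero_zero]; norm_num
    | succ n => rw [pc_zero_succ]
  | succ r ih =>
    intro n
    cases n with
    | zero => rw [pc_succ_zero]
    | succ n =>
      rw [pc_succ_succ]
      exact div_nonneg (Finset.sum_nonneg fun j _ => ih j) (by positivity)

lemma pc_le_one : ∀ r n, pc r n ≤ 1 := by
  intro r
  induction r with
  | zero =>
    intro n
    cases n with
    | zero => rw [pc_zero_zero]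
    | succ n => rw [pc_zero_succ]; norm_num
  | succ r ih =>
    intro n
    cases n with
    | zero => rw [pc_succ_zero]; norm_num
    | succ n =>
      rw [pc_succ_succ, div_le_one (by positivity)]
      calc ∑ j ∈ Finset.range (n + 1), pc r j
          ≤ ∑ _j ∈ Finset.range (n + 1), (1 : ℝ) :=
            Finset.sum_le_sum fun j _ => ih j
        _ = (n : ℝ) + 1 := by simp

lemma pc_summable_norm (r : ℕ) {y : ℝ} (hy : |y| < 1) :
    Summable fun n => ‖pc r n * y ^ n‖ := by
  refine Summable.of_nonneg_of_le (fun n => norm_nonneg _) (fun n => ?_)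
    (summable_geometric_of_lt_one (abs_nonneg y) hy)
  rw [Real.norm_eq_abs, abs_mul, abs_pow, abs_of_nonneg (pc_nonneg r n)]
  calc pc r n * |y| ^ n ≤ 1 * |y| ^ n :=
        mul_le_mul_of_nonneg_right (pc_le_one r n) (by positivity)
    _ = |y| ^ n := one_mul _

lemma pc_summable (r : ℕ) {y : ℝ} (hy : |y| < 1) :
    Summable fun n => pc r n * y ^ n :=
  (pc_summable_norm r hy).of_norm

lemma hasDerivAt_F (r : ℕ) {z : ℝ} (hz : |z| < 1) :
    HasDerivAt (fun w : ℝ => ∑' n, pc (r + 1) n * w ^ n)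
      (∑' n, pc (r + 1) n * ((n : ℝ) * z ^ (n - 1))) z := by
  set ρ : ℝ := (|z| + 1) / 2 with hρdef
  have hρ0 : 0 < ρ := by positivity
  have hρ1 : ρ < 1 := by rw [hρdef]; linarith
  have hzρ : |z| < ρ := by rw [hρdef]; linarith [abs_nonneg z]
  have hu : Summable (fun n : ℕ => (n : ℝ) * ρ ^ (n - 1)) := by
    apply (summable_nat_add_iff 1).1
    have h1 : Summable (fun n : ℕ => (n : ℝ) * ρ ^ n) := by
      simpa using summable_pow_mul_geometric_of_norm_lt_one (R := ℝ) 1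
        (r := ρ) (by rwa [Real.norm_eq_abs, abs_of_pos hρ0])
    have h2 : Summable (fun n : ℕ => ρ ^ n) :=
      summable_geometric_of_lt_one hρ0.le hρ1
    have := h1.add h2
    refine this.congr fun n => ?_
    simp [Nat.add_sub_cancel, add_mul]
  refine hasDerivAt_tsum_of_isPreconnected hu (isOpen_Ioo (a := -ρ) (b := ρ))
      ((convex_Ioo _ _).isPreconnected)
      (g := fun n w => pc (r + 1) n * w ^ n)
      (g' := fun n w => pc (r + 1) n * ((n : ℝ) * w ^ (n - 1)))
      (fun n w _ => (hasDerivAt_pow n w).const_mul _)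
      (fun n w hw => ?_) (y₀ := 0) ?_ ?_ ?_
  · have hw' : |w| ≤ ρ := le_of_lt (abs_lt.2 ⟨hw.1, hw.2⟩)
    rw [Real.norm_eq_abs, abs_mul, abs_mul, abs_pow,
      abs_of_nonneg (pc_nonneg _ _), Nat.abs_cast]
    calc pc (r + 1) n * ((n : ℝ) * |w| ^ (n - 1))
        ≤ 1 * ((n : ℝ) * ρ ^ (n - 1)) := by
          apply mul_le_mul (pc_le_one _ _) ?_ (by positivity) (by norm_num)
          exact mul_le_mul_of_nonneg_left
            (pow_le_pow_left₀ (abs_nonneg w) hw' _) (by positivity)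
      _ = (n : ℝ) * ρ ^ (n - 1) := one_mul _
  · exact ⟨by linarith, hρ0⟩
  · refine summable_of_ne_finset_zero (s := {0}) fun n hn => ?_
    rcases Nat.exists_eq_succ_of_ne_zero (by simpa using hn) with ⟨m, rfl⟩
    simp
  · exact abs_lt.1 hzρ

lemma deriv_sum_eq (r : ℕ) {z : ℝ} (hz : |z| < 1)
    (IH : ∑' n, pc r n * z ^ n
        = (-Real.log (1 - z)) ^ r / (Nat.factorial r : ℝ)) :
    ∑' n, pc (r + 1) n * ((n : ℝ) * z ^ (n - 1))
      = (-Real.log (1 - z)) ^ r / (Nat.factorial r : ℝ) * (1 - z)⁻¹ := by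
  have hρ := hz
  -- summability of the differentiated series
  have hsum : Summable (fun n => pc (r + 1) n * ((n : ℝ) * z ^ (n - 1))) := by
    set ρ : ℝ := (|z| + 1) / 2 with hρdef
    have hρ0 : 0 < ρ := by positivity
    have hρ1 : ρ < 1 := by rw [hρdef]; linarith
    have hzρ : |z| ≤ ρ := by rw [hρdef]; linarith
    have hu : Summable (fun n : ℕ => (n : ℝ) * ρ ^ (n - 1)) := by
      apply (summable_nat_add_iff 1).1
      have h1 : Summable (fun n : ℕ => (n : ℝ) * ρ ^ n) := by
        simpa using summable_pow_mul_geometric_of_norm_lt_one (R := ℝ) 1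
          (r := ρ) (by rwa [Real.norm_eq_abs, abs_of_pos hρ0])
      have h2 : Summable (fun n : ℕ => ρ ^ n) :=
        summable_geometric_of_lt_one hρ0.le hρ1
      refine (h1.add h2).congr fun n => ?_
      simp [Nat.add_sub_cancel, add_mul]
    refine Summable.of_norm_bounded hu fun n => ?_
    rw [Real.norm_eq_abs, abs_mul, abs_mul, abs_pow,
      abs_of_nonneg (pc_nonneg _ _), Nat.abs_cast]
    calc pc (r + 1) n * ((n : ℝ) * |z| ^ (n - 1))
        ≤ 1 * ((n : ℝ) * ρ ^ (n - 1)) := by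
          apply mul_le_mul (pc_le_one _ _) ?_ (by positivity) (by norm_num)
          exact mul_le_mul_of_nonneg_left
            (pow_le_pow_left₀ (abs_nonneg z) hzρ _) (by positivity)
      _ = (n : ℝ) * ρ ^ (n - 1) := one_mul _
  rw [Summable.tsum_eq_zero_add hsum]
  have h0 : pc (r + 1) 0 * ((0 : ℕ) : ℝ) * z ^ (0 - 1) = 0 := by simp
  have hterm : ∀ n : ℕ,
      pc (r + 1) (n + 1) * (((n + 1 : ℕ) : ℝ) * z ^ (n + 1 - 1))
        = (∑ j ∈ Finset.range (n + 1), pc r j) * z ^ n := by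
    intro n
    rw [pc_succ_succ]
    have hne : ((n : ℝ) + 1) ≠ 0 := by positivity
    push_cast
    field_simp
  have hrw : (∑' n, pc (r + 1) (n + 1) * (((n + 1 : ℕ) : ℝ) * z ^ (n + 1 - 1)))
      = ∑' n, (∑ j ∈ Finset.range (n + 1), pc r j) * z ^ n :=
    tsum_congr hterm
  -- Cauchy product
  have hf : Summable fun k => ‖pc r k * z ^ k‖ := pc_summable_norm r hz
  have hg : Summable fun n => ‖z ^ n‖ := by
    refine Summable.congr (summable_geometric_of_lt_one (abs_nonneg z) hz) fun n => ?_
    rw [Real.norm_eq_abs, abs_pow]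
  have hC := tsum_mul_tsum_eq_tsum_sum_range_of_summable_norm hf hg
  have hCrw : (∑' n, ∑ k ∈ Finset.range (n + 1), (pc r k * z ^ k) * z ^ (n - k))
      = ∑' n, (∑ j ∈ Finset.range (n + 1), pc r j) * z ^ n := by
    refine tsum_congr fun n => ?_
    rw [Finset.sum_mul]
    refine Finset.sum_congr rfl fun k hk => ?_
    rw [mul_assoc, ← pow_add, Nat.add_sub_cancel' (Finset.mem_range_succ_iff.1 hk)]
  have hgeo : (∑' n : ℕ, z ^ n) = (1 - z)⁻¹ :=
    tsum_geometric_of_norm_lt_one (by rwa [Real.norm_eq_abs])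
  calc pc (r + 1) 0 * (((0 : ℕ) : ℝ) * z ^ (0 - 1))
        + ∑' n, pc (r + 1) (n + 1) * (((n + 1 : ℕ) : ℝ) * z ^ (n + 1 - 1))
      = ∑' n, (∑ j ∈ Finset.range (n + 1), pc r j) * z ^ n := by
        rw [hrw]; push_cast; simp
    _ = (∑' n, pc r n * z ^ n) * (∑' n : ℕ, z ^ n) := by rw [hC, hCrw]
    _ = (-Real.log (1 - z)) ^ r / (Nat.factorial r : ℝ) * (1 - z)⁻¹ := by
        rw [IH, hgeo]

lemma pc_tsum : ∀ (r : ℕ) {y : ℝ}, |y| < 1 →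
    (∑' n, pc r n * y ^ n) = (-Real.log (1 - y)) ^ r / (Nat.factorial r : ℝ) := by
  intro r
  induction r with
  | zero =>
    intro y hy
    rw [tsum_eq_single 0 (fun n hn => ?_)]
    · rw [pc_zero_zero]; simp
    · rcases Nat.exists_eq_succ_of_ne_zero hn with ⟨m, rfl⟩
      rw [pc_zero_succ]; simp
  | succ r ih =>
    intro y hy
    set s : Set ℝ := Set.Ioo (-1 : ℝ) 1 with hsdef
    have hsopen : IsOpen s := isOpen_Ioo
    have habs : ∀ z ∈ s, |z| < 1 := fun z hz => abs_lt.2 ⟨hz.1, hz.2⟩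
    -- the two functions
    set F : ℝ → ℝ := fun w => ∑' n, pc (r + 1) n * w ^ n with hFdef
    set G : ℝ → ℝ := fun w =>
      (-Real.log (1 - w)) ^ (r + 1) / (Nat.factorial (r + 1) : ℝ) with hGdef
    set D : ℝ → ℝ := fun z =>
      (-Real.log (1 - z)) ^ r / (Nat.factorial r : ℝ) * (1 - z)⁻¹ with hDdef
    have hF : ∀ z ∈ s, HasDerivAt F (D z) z := by
      intro z hz
      have := hasDerivAt_F r (habs z hz)
      rwa [deriv_sum_eq r (habs z hz) (ih (habs z hz))] at this
    have hG : ∀ z ∈ s, HasDerivAt G (D z) z := by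
      intro z hz
      have hz' := habs z hz
      have h1z : (1 : ℝ) - z ≠ 0 := by
        have := (abs_lt.1 hz').2; intro h; linarith [sub_eq_zero.1 h]
      have hL : HasDerivAt (fun w : ℝ => -Real.log (1 - w)) ((1 - z)⁻¹) z := by
        have h1 : HasDerivAt (fun w : ℝ => 1 - w) (-1) z :=
          (hasDerivAt_id z).const_sub 1
        have h2 := (Real.hasDerivAt_log h1z).comp z h1
        have h3 := h2.neg
        exact h3.congr_deriv (by ring)
      have h4 := (hL.pow (r + 1)).div_const ((Nat.factorial (r + 1) : ℝ))
      refine h4.congr_deriv ?_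
      rw [hDdef]
      have hfac : ((Nat.factorial (r + 1) : ℝ)) = ((r : ℝ) + 1) * (Nat.factorial r : ℝ) := by
        rw [Nat.factorial_succ]; push_cast; ring
      have hfr : (Nat.factorial r : ℝ) ≠ 0 := by
        exact_mod_cast Nat.factorial_ne_zero r
      have hr1 : ((r : ℝ) + 1) ≠ 0 := by positivity
      rw [hfac]
      simp only [Nat.add_sub_cancel]
      push_cast
      field_simp
    -- equality on s via equal derivatives and equality at 0
    have h0s : (0 : ℝ) ∈ s := by constructor <;> norm_num
    have hF0 : F 0 = 0 := by
      rw [hFdef]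
      simp only
      rw [tsum_eq_single 0 (fun n hn => ?_)]
      · rw [pc_succ_zero]; simp
      · rcases Nat.exists_eq_succ_of_ne_zero hn with ⟨m, rfl⟩
        simp
    have hG0 : G 0 = 0 := by
      rw [hGdef]
      simp [Real.log_one]
    have heq : Set.EqOn F G s := by
      refine Convex.eqOn_of_fderivWithin_eq (convex_Ioo _ _)
        (fun z hz => ((hF z hz).differentiableAt).differentiableWithinAt)
        (fun z hz => ((hG z hz).differentiableAt).differentiableWithinAt)
        (hsopen.uniqueDiffOn) (fun z hz => ?_) h0s (by rw [hF0, hG0])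
      rw [fderivWithin_of_isOpen hsopen hz, fderivWithin_of_isOpen hsopen hz,
        (hF z hz).hasFDerivAt.fderiv, (hG z hz).hasFDerivAt.fderiv]
    exact heq (abs_lt.1 hy)

lemma key_polylog (r : ℕ) {t : ℝ} (ht : |t| < Real.log 2) :
    (Nat.factorial r : ℝ) * mpolylog (List.replicate r 1) (1 - Real.exp (-t)) = t ^ r := by
  set y : ℝ := 1 - Real.exp (-t) with hydef
  have hy : |y| < 1 := by
    rw [abs_lt]
    constructor
    · have h2 : Real.exp (-t) < 2 := by
        rw [← Real.exp_log (by norm_num : (0 : ℝ) < 2)]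
        apply Real.exp_lt_exp.2
        have := abs_lt.1 ht; linarith
      rw [hydef]; linarith
    · have := Real.exp_pos (-t); rw [hydef]; linarith
  have hmp : mpolylog (List.replicate r 1) y = ∑' n, pc r n * y ^ n := by
    rw [mpolylog, List.reverse_replicate]; rfl
  rw [hmp, pc_tsum r hy]
  have h1y : 1 - y = Real.exp (-t) := by rw [hydef]; ring
  rw [h1y, Real.log_exp]
  have hfr : (Nat.factorial r : ℝ) ≠ 0 := by exact_mod_cast Nat.factorial_ne_zero r
  field_simp

/-- Uniqueness of power series coefficients, elementary version. -/
lemma coeff_zero_of_tsum_zero (d : ℕ → ℝ) (s : ℝ) (hs : 0 < s)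
    (hsum : Summable fun n => |d n| * s ^ n)
    (h : ∀ t : ℝ, 0 < |t| → |t| < s → (∑' n, d n * t ^ n) = 0) :
    ∀ k, d k = 0 := by
  set M : ℝ := ∑' n, |d n| * s ^ n with hMdef
  have hM : ∀ n, |d n| * s ^ n ≤ M :=
    fun n => Summable.le_tsum hsum n (fun j _ => by positivity)
  have hM0 : 0 ≤ M := le_trans (by positivity) (hM 0)
  -- summability of shifted weighted series
  have hshift : ∀ (k : ℕ), Summable (fun n => |d (n + k)| * (s / 2) ^ n) := by
    intro k
    refine Summable.of_nonneg_of_le (fun n => by positivity) (fun n => ?_)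
      (((summable_geometric_of_lt_one (by norm_num) (by norm_num : (2⁻¹ : ℝ) < 1))).mul_left
        (M / s ^ k))
    have h1 : |d (n + k)| * s ^ n ≤ M / s ^ k := by
      rw [le_div_iff₀ (by positivity)]
      calc |d (n + k)| * s ^ n * s ^ k = |d (n + k)| * s ^ (n + k) := by
            rw [mul_assoc, ← pow_add]
        _ ≤ M := hM (n + k)
    calc |d (n + k)| * (s / 2) ^ n = (|d (n + k)| * s ^ n) * (2⁻¹ : ℝ) ^ n := by
          rw [show s / 2 = s * (2⁻¹ : ℝ) by ring, mul_pow]; ring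
      _ ≤ (M / s ^ k) * (2⁻¹ : ℝ) ^ n :=
          mul_le_mul_of_nonneg_right h1 (by positivity)
  have hsummable : ∀ (k : ℕ) (t : ℝ), |t| ≤ s / 2 →
      Summable (fun n => d (n + k) * t ^ n) := by
    intro k t ht
    refine Summable.of_norm_bounded (hshift k) fun n => ?_
    rw [Real.norm_eq_abs, abs_mul, abs_pow]
    exact mul_le_mul_of_nonneg_left
      (pow_le_pow_left₀ (abs_nonneg t) ht _) (abs_nonneg _)
  -- the norm bound on the tail sum
  have htail : ∀ (k : ℕ) (t : ℝ), |t| ≤ s / 2 →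
      |∑' n, d (n + k) * t ^ n| ≤ ∑' n, |d (n + k)| * (s / 2) ^ n := by
    intro k t ht
    have h1 : Summable (fun n => ‖d (n + k) * t ^ n‖) := by
      refine Summable.of_nonneg_of_le (fun n => norm_nonneg _) (fun n => ?_) (hshift k)
      rw [Real.norm_eq_abs, abs_mul, abs_pow]
      exact mul_le_mul_of_nonneg_left
        (pow_le_pow_left₀ (abs_nonneg t) ht _) (abs_nonneg _)
    calc |∑' n, d (n + k) * t ^ n| ≤ ∑' n, ‖d (n + k) * t ^ n‖ := by
          rw [← Real.norm_eq_abs]; exact norm_tsum_le_tsum_norm h1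
      _ ≤ ∑' n, |d (n + k)| * (s / 2) ^ n := by
          refine Summable.tsum_le_tsum (fun n => ?_) h1 (hshift k)
          rw [Real.norm_eq_abs, abs_mul, abs_pow]
          exact mul_le_mul_of_nonneg_left
            (pow_le_pow_left₀ (abs_nonneg t) ht _) (abs_nonneg _)
  -- the induction step
  have step : ∀ k : ℕ,
      (∀ t : ℝ, 0 < |t| → |t| < s / 2 → (∑' n, d (n + k) * t ^ n) = 0) →
      d k = 0 ∧
      (∀ t : ℝ, 0 < |t| → |t| < s / 2 → (∑' n, d (n + (k + 1)) * t ^ n) = 0) := by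
    intro k Pk
    have key : ∀ t : ℝ, 0 < |t| → |t| < s / 2 →
        d k = -(t * ∑' n, d (n + (k + 1)) * t ^ n) := by
      intro t h1 h2
      have hS := hsummable k t h2.le
      have heq := Summable.tsum_eq_zero_add hS
      rw [Pk t h1 h2] at heq
      have hsh : (∑' n, d ((n + 1) + k) * t ^ (n + 1))
          = t * ∑' n, d (n + (k + 1)) * t ^ n := by
        rw [← tsum_mul_left]
        refine tsum_congr fun n => ?_
        rw [show (n + 1) + k = n + (k + 1) by omega]
        ring
      rw [hsh] at heq
      simp only [Nat.zero_add, pow_zero, mul_one] at heq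
      linarith [heq]
    set C : ℝ := ∑' n, |d (n + (k + 1))| * (s / 2) ^ n with hCdef
    have hC0 : 0 ≤ C := tsum_nonneg fun n => by positivity
    have hdk : d k = 0 := by
      by_contra hne
      have hdk0 : 0 < |d k| := abs_pos.2 hne
      set t0 : ℝ := min (s / 4) (|d k| / (2 * (C + 1))) with ht0def
      have ht00 : 0 < t0 := lt_min (by positivity) (by positivity)
      have ht0abs : |t0| = t0 := abs_of_pos ht00
      have ht0s : |t0| < s / 2 := by
        rw [ht0abs]
        calc t0 ≤ s / 4 := min_le_left _ _
          _ < s / 2 := by linarith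
      have hkey := key t0 (by rw [ht0abs]; exact ht00) ht0s
      have hb := htail (k + 1) t0 ht0s.le
      have habs : |d k| ≤ t0 * C := by
        rw [hkey, abs_neg, abs_mul, ht0abs]
        exact mul_le_mul_of_nonneg_left hb ht00.le
      have ht0le : t0 ≤ |d k| / (2 * (C + 1)) := min_le_right _ _
      have : t0 * C ≤ |d k| / (2 * (C + 1)) * C :=
        mul_le_mul_of_nonneg_right ht0le hC0
      have hfinal : |d k| ≤ |d k| / (2 * (C + 1)) * C := le_trans habs this
      rw [div_mul_eq_mul_div, le_div_iff₀ (by positivity)] at hfinal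
      nlinarith
    refine ⟨hdk, fun t h1 h2 => ?_⟩
    have := key t h1 h2
    rw [hdk] at this
    have ht : t ≠ 0 := fun h => by rw [h] at h1; simp at h1
    have := this.symm
    rw [neg_eq_zero, mul_eq_zero] at this
    rcases this with h | h
    · exact absurd h ht
    · exact h
  have Pall : ∀ k : ℕ, ∀ t : ℝ, 0 < |t| → |t| < s / 2 →
      (∑' n, d (n + k) * t ^ n) = 0 := by
    intro k
    induction k with
    | zero =>
      intro t h1 h2
      have := h t h1 (by linarith)
      simpa using this
    | succ k ihk => exact (step k ihk).2
  intro k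
  exact (step k (Pall k)).1

end DMPBAux

/-- If `β x n` are the degenerate multi-poly-Bernoulli polynomials with all `r` indices `1`,
and `γ x n = β_{n,λ}^{(r)}(x)` are Carlitz's higher-order degenerate Bernoulli polynomials
(defined by `(t/((1+λt)^{1/λ}-1))^r (1+λt)^{x/λ} = ∑_n γ x n · t^n/n!`), then they coincide. -/
theorem degMultiPolyBernoulli_ones_eq_carlitz (lam : ℝ) (hlam : lam ≠ 0)
    (r : ℕ) (hr : 0 < r)
    (β γ : ℝ → ℕ → ℝ) (ε : ℝ) (hε : 0 < ε)
    (hβ : ∀ x t : ℝ, 0 < |t| → |t| < ε →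
      (Nat.factorial r : ℝ) * mpolylog (List.replicate r 1) (1 - Real.exp (-t)) /
          ((1 + lam * t) ^ (1 / lam) - 1) ^ r * (1 + lam * t) ^ (x / lam) =
        ∑' n : ℕ, β x n * t ^ n / (Nat.factorial n : ℝ))
    (hγ : ∀ x t : ℝ, 0 < |t| → |t| < ε →
      (t / ((1 + lam * t) ^ (1 / lam) - 1)) ^ r * (1 + lam * t) ^ (x / lam) =
        ∑' n : ℕ, γ x n * t ^ n / (Nat.factorial n : ℝ))
    (n : ℕ) (x : ℝ) :
    β x n = γ x n := by
  classical
  set δ : ℝ := min ε (min (Real.log 2) (1 / (1 + |lam|))) with hδdef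
  have hlog2 : 0 < Real.log 2 := Real.log_pos (by norm_num)
  have hδ0 : 0 < δ := lt_min hε (lt_min hlog2 (by positivity))
  -- basic facts for t in the punctured interval
  have hbase : ∀ t : ℝ, |t| < δ → 0 < 1 + lam * t := by
    intro t ht
    have h1 : |t| < 1 / (1 + |lam|) :=
      lt_of_lt_of_le ht (le_trans (min_le_right _ _) (min_le_right _ _))
    have h2 : |lam * t| < 1 := by
      rw [abs_mul]
      calc |lam| * |t| ≤ |lam| * (1 / (1 + |lam|)) :=
            mul_le_mul_of_nonneg_left h1.le (abs_nonneg lam)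
        _ < 1 := by
            rw [mul_one_div, div_lt_one (by positivity)]
            linarith [abs_nonneg lam]
    have := (abs_lt.1 h2).1
    linarith
  have hDne : ∀ t : ℝ, 0 < |t| → |t| < δ →
      (1 + lam * t) ^ (1 / lam) - 1 ≠ 0 := by
    intro t ht0 htδ
    have hb := hbase t htδ
    have htne : t ≠ 0 := fun h => by rw [h] at ht0; simp at ht0
    rw [sub_ne_zero]
    rw [Real.rpow_def_of_pos hb]
    rw [Ne, Real.exp_eq_one_iff]
    intro hzero
    rcases mul_eq_zero.1 hzero with h | h
    · rcases Real.log_eq_zero.1 h with h' | h' | h'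
      · linarith
      · have : lam * t = 0 := by linarith
        rcases mul_eq_zero.1 this with h'' | h''
        · exact hlam h''
        · exact htne h''
      · linarith
    · rw [div_eq_zero_iff] at h
      rcases h with h | h
      · norm_num at h
      · exact hlam h
  have hVne : ∀ t : ℝ, 0 < |t| → |t| < δ →
      (t / ((1 + lam * t) ^ (1 / lam) - 1)) ^ r * (1 + lam * t) ^ (x / lam) ≠ 0 := by
    intro t ht0 htδ
    have htne : t ≠ 0 := fun h => by rw [h] at ht0; simp at ht0
    have hP : (0 : ℝ) < (1 + lam * t) ^ (x / lam) :=
      Real.rpow_pos_of_pos (hbase t htδ) _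
    exact mul_ne_zero (pow_ne_zero r (div_ne_zero htne (hDne t ht0 htδ))) (ne_of_gt hP)
  -- the two generating functions coincide on the punctured interval
  have hLHS : ∀ t : ℝ, 0 < |t| → |t| < δ →
      (Nat.factorial r : ℝ) * mpolylog (List.replicate r 1) (1 - Real.exp (-t)) /
          ((1 + lam * t) ^ (1 / lam) - 1) ^ r * (1 + lam * t) ^ (x / lam)
        = (t / ((1 + lam * t) ^ (1 / lam) - 1)) ^ r * (1 + lam * t) ^ (x / lam) := by
    intro t ht0 htδ
    have hlt : |t| < Real.log 2 :=
      lt_of_lt_of_le htδ (le_trans (min_le_right _ _) (min_le_left _ _))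
    rw [DMPBAux.key_polylog r hlt, div_pow]
  have hεδ : ∀ t : ℝ, |t| < δ → |t| < ε := fun t ht => lt_of_lt_of_le ht (min_le_left _ _)
  have hEq : ∀ t : ℝ, 0 < |t| → |t| < δ →
      (∑' m : ℕ, β x m * t ^ m / (Nat.factorial m : ℝ))
        = ∑' m : ℕ, γ x m * t ^ m / (Nat.factorial m : ℝ) := by
    intro t ht0 htδ
    rw [← hβ x t ht0 (hεδ t htδ), ← hγ x t ht0 (hεδ t htδ)]
    exact hLHS t ht0 htδ
  have hSγ : ∀ t : ℝ, 0 < |t| → |t| < δ →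
      Summable (fun m => γ x m * t ^ m / (Nat.factorial m : ℝ)) := by
    intro t ht0 htδ
    by_contra hns
    have := tsum_eq_zero_of_not_summable hns
    rw [← hγ x t ht0 (hεδ t htδ)] at this
    exact hVne t ht0 htδ this
  have hSβ : ∀ t : ℝ, 0 < |t| → |t| < δ →
      Summable (fun m => β x m * t ^ m / (Nat.factorial m : ℝ)) := by
    intro t ht0 htδ
    by_contra hns
    have := tsum_eq_zero_of_not_summable hns
    rw [← hβ x t ht0 (hεδ t htδ), hLHS t ht0 htδ] at this
    exact hVne t ht0 htδ this
  -- coefficient sequence of the difference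
  set d : ℕ → ℝ := fun m => (β x m - γ x m) / (Nat.factorial m : ℝ) with hddef
  have hdt : ∀ t : ℝ, 0 < |t| → |t| < δ → (∑' m, d m * t ^ m) = 0 := by
    intro t ht0 htδ
    have h1 := hSβ t ht0 htδ
    have h2 := hSγ t ht0 htδ
    have h3 : (∑' m, (β x m * t ^ m / (Nat.factorial m : ℝ)
        - γ x m * t ^ m / (Nat.factorial m : ℝ))) = 0 := by
      rw [Summable.tsum_sub h1 h2, hEq t ht0 htδ, sub_self]
    rw [← h3]
    refine tsum_congr fun m => ?_
    rw [hddef]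
    ring
  -- absolute summability at radius δ/4 from summability at δ/2
  have ht0pos : 0 < δ / 2 := by linarith
  have hSd : Summable (fun m => d m * (δ / 2) ^ m) := by
    have h1 := hSβ (δ / 2) (by rw [abs_of_pos ht0pos]; exact ht0pos)
      (by rw [abs_of_pos ht0pos]; linarith)
    have h2 := hSγ (δ / 2) (by rw [abs_of_pos ht0pos]; exact ht0pos)
      (by rw [abs_of_pos ht0pos]; linarith)
    refine (h1.sub h2).congr fun m => ?_
    rw [hddef]
    ring
  have hBdd : BddAbove (Set.range fun m => |d m * (δ / 2) ^ m|) := by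
    have := hSd.tendsto_atTop_zero.abs
    simpa using this.bddAbove_range
  obtain ⟨M, hMmem⟩ := hBdd
  have hM : ∀ m, |d m| * (δ / 2) ^ m ≤ M := by
    intro m
    have h1 : |d m * (δ / 2) ^ m| ≤ M := hMmem ⟨m, rfl⟩
    rwa [abs_mul, abs_pow, abs_of_pos ht0pos] at h1
  have hsum4 : Summable (fun m => |d m| * (δ / 4) ^ m) := by
    refine Summable.of_nonneg_of_le (fun m => by positivity) (fun m => ?_)
      ((summable_geometric_of_lt_one (by norm_num) (by norm_num : (2⁻¹ : ℝ) < 1)).mul_left M)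
    calc |d m| * (δ / 4) ^ m = (|d m| * (δ / 2) ^ m) * (2⁻¹ : ℝ) ^ m := by
          rw [show δ / 4 = (δ / 2) * (2⁻¹ : ℝ) by ring, mul_pow]; ring
      _ ≤ M * (2⁻¹ : ℝ) ^ m := mul_le_mul_of_nonneg_right (hM m) (by positivity)
  have hzero := DMPBAux.coeff_zero_of_tsum_zero d (δ / 4) (by linarith) hsum4
    (fun t ht1 ht2 => hdt t ht1 (by linarith))
  have hdn := hzero n
  rw [hddef] at hdn
  have hfac : (Nat.factorial n : ℝ) ≠ 0 := by exact_mod_cast Nat.factorial_ne_zero n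
  have := div_eq_zero_iff.1 hdn
  rcases this with h | h
  · linarith [sub_eq_zero.1 h]
  · exact absurd h hfac
end

section
/- The multi-poly-Bernoulli numbers with all indices equal to 1 coincide with the higher-order Bernoulli numbers: B_n^{(1,1,...,1)} (r ones) = B_n^{(r)} for all n ≥ 0, where B_n^{(r)} are Bernoulli numbers of order r. -/
open scoped BigOperators

namespace MPBAux

/-- Abbreviation for the coefficients of `Li_{1,…,1}` (`r` ones). -/
noncomputable def c (r n : ℕ) : ℝ := mpolylogCoeff (List.replicate r 1) n

lemma c_zero_zero : c 0 0 = 1 := rfl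

lemma c_zero_succ (n : ℕ) : c 0 (n + 1) = 0 := rfl

lemma c_succ_zero (r : ℕ) : c (r + 1) 0 = 0 := by
  rw [c, List.replicate_succ]
  rfl

lemma c_succ_succ (r n : ℕ) :
    c (r + 1) (n + 1) = (∑ j ∈ Finset.range (n + 1), c r j) / ((n : ℝ) + 1) := by
  rw [c, List.replicate_succ]
  show (∑ j ∈ Finset.range (n + 1), mpolylogCoeff (List.replicate r 1) j) /
      ((n + 1 : ℕ) : ℝ) ^ (1 : ℤ) = _
  rw [zpow_one]
  push_cast
  rfl

lemma c_nonneg : ∀ r n, 0 ≤ c r n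
  | 0, 0 => by rw [c_zero_zero]; norm_num
  | 0, n + 1 => le_of_eq (c_zero_succ n).symm
  | r + 1, 0 => le_of_eq (c_succ_zero r).symm
  | r + 1, n + 1 => by
      rw [c_succ_succ]
      exact div_nonneg (Finset.sum_nonneg fun j _ => c_nonneg r j) (by positivity)

lemma c_le : ∀ r n, c r n ≤ (n : ℝ) ^ r
  | 0, 0 => by rw [c_zero_zero]; norm_num
  | 0, n + 1 => by rw [c_zero_succ]; positivity
  | r + 1, 0 => by
      rw [c_succ_zero]
      norm_num
  | r + 1, n + 1 => by
      rw [c_succ_succ]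
      have h1 : (∑ j ∈ Finset.range (n + 1), c r j) ≤
          ∑ _j ∈ Finset.range (n + 1), (n : ℝ) ^ r := by
        refine Finset.sum_le_sum fun j hj => (c_le r j).trans ?_
        exact pow_le_pow_left₀ (Nat.cast_nonneg j)
          (Nat.cast_le.2 (Nat.lt_succ_iff.mp (Finset.mem_range.mp hj))) r
      have h2 : (∑ _j ∈ Finset.range (n + 1), (n : ℝ) ^ r) = ((n : ℝ) + 1) * (n : ℝ) ^ r := by
        rw [Finset.sum_const, Finset.card_range]
        push_cast
        ring
      have hn1 : (0 : ℝ) < (n : ℝ) + 1 := by positivity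
      have h3 : (∑ j ∈ Finset.range (n + 1), c r j) / ((n : ℝ) + 1) ≤ (n : ℝ) ^ r := by
        rw [div_le_iff₀ hn1]
        calc (∑ j ∈ Finset.range (n + 1), c r j) ≤ ((n : ℝ) + 1) * (n : ℝ) ^ r := by
              rw [← h2]; exact h1
          _ = (n : ℝ) ^ r * ((n : ℝ) + 1) := by ring
      refine h3.trans ?_
      have h4 : (n : ℝ) ^ r ≤ ((n : ℝ) + 1) ^ r :=
        pow_le_pow_left₀ (Nat.cast_nonneg n) (by linarith) r
      have h5 : ((n : ℝ) + 1) ^ r ≤ ((n : ℝ) + 1) ^ (r + 1) :=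
        pow_le_pow_right₀ (by linarith [Nat.cast_nonneg (α := ℝ) n]) (Nat.le_succ r)
      push_cast
      linarith

lemma norm_c_mul_pow_le (r : ℕ) {x : ℝ} (n : ℕ) :
    ‖c r n * x ^ n‖ ≤ (n : ℝ) ^ r * |x| ^ n := by
  rw [norm_mul, norm_pow, Real.norm_eq_abs, Real.norm_eq_abs, abs_of_nonneg (c_nonneg r n)]
  exact mul_le_mul_of_nonneg_right (c_le r n) (by positivity)

lemma summable_c_mul_pow (r : ℕ) {x : ℝ} (hx : |x| < 1) :
    Summable (fun n => c r n * x ^ n) := by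
  have h := summable_pow_mul_geometric_of_norm_lt_one (R := ℝ) r
    (r := |x|) (by rwa [Real.norm_eq_abs, abs_abs])
  exact Summable.of_norm_bounded h (norm_c_mul_pow_le r)

lemma summable_norm_c_mul_pow (r : ℕ) {x : ℝ} (hx : |x| < 1) :
    Summable (fun n => ‖c r n * x ^ n‖) := by
  have h := summable_pow_mul_geometric_of_norm_lt_one (R := ℝ) r
    (r := |x|) (by rwa [Real.norm_eq_abs, abs_abs])
  exact Summable.of_nonneg_of_le (fun n => norm_nonneg _) (norm_c_mul_pow_le r) h

/-- Uniform bound for the differentiated series. -/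
lemma deriv_bound (r : ℕ) {ρ y : ℝ} (hρ : 0 < ρ) (hy : |y| ≤ ρ) (n : ℕ) :
    ‖c r n * ((n : ℝ) * y ^ (n - 1))‖ ≤ (n : ℝ) ^ (r + 2) * ρ ^ n / ρ := by
  rcases n with _ | m
  · simp
  · have h1 : ‖c r (m + 1) * (((m + 1 : ℕ) : ℝ) * y ^ m)‖ =
        c r (m + 1) * (((m : ℝ) + 1) * |y| ^ m) := by
      rw [norm_mul, norm_mul, norm_pow, Real.norm_eq_abs, Real.norm_eq_abs, Real.norm_eq_abs,
        abs_of_nonneg (c_nonneg r (m + 1))]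
      push_cast
      rw [abs_of_nonneg (by positivity : (0:ℝ) ≤ (m : ℝ) + 1)]
    have h2 : c r (m + 1) ≤ ((m : ℝ) + 1) ^ r := by
      have := c_le r (m + 1); push_cast at this ⊢; linarith
    have h3 : |y| ^ m ≤ ρ ^ m := pow_le_pow_left₀ (abs_nonneg y) hy m
    have h4 : c r (m + 1) * (((m : ℝ) + 1) * |y| ^ m) ≤
        ((m : ℝ) + 1) ^ r * (((m : ℝ) + 1) * ρ ^ m) := by
      have hc := c_nonneg r (m + 1)
      have h5 : ((m : ℝ) + 1) * |y| ^ m ≤ ((m : ℝ) + 1) * ρ ^ m :=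
        mul_le_mul_of_nonneg_left h3 (by positivity)
      exact mul_le_mul h2 h5 (by positivity) (by positivity)
    have h6 : ((m : ℝ) + 1) ^ r * (((m : ℝ) + 1) * ρ ^ m) ≤
        (((m + 1 : ℕ) : ℝ)) ^ (r + 2) * ρ ^ (m + 1) / ρ := by
      push_cast
      have h9 : ρ ^ (m + 1) / ρ = ρ ^ m := by
        rw [pow_succ]
        field_simp
      rw [mul_div_assoc, h9]
      have h7 : ((m : ℝ) + 1) ^ (r + 1) ≤ ((m : ℝ) + 1) ^ (r + 2) :=
        pow_le_pow_right₀ (by linarith [Nat.cast_nonneg (α := ℝ) m]) (by omega)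
      have h8 : (0 : ℝ) ≤ ρ ^ m := by positivity
      calc ((m : ℝ) + 1) ^ r * (((m : ℝ) + 1) * ρ ^ m)
          = ((m : ℝ) + 1) ^ (r + 1) * ρ ^ m := by ring
        _ ≤ ((m : ℝ) + 1) ^ (r + 2) * ρ ^ m := mul_le_mul_of_nonneg_right h7 h8
    calc ‖c r (m + 1) * (((m + 1 : ℕ) : ℝ) * y ^ m)‖
        = c r (m + 1) * (((m : ℝ) + 1) * |y| ^ m) := h1
      _ ≤ ((m : ℝ) + 1) ^ r * (((m : ℝ) + 1) * ρ ^ m) := h4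
      _ ≤ (((m + 1 : ℕ) : ℝ)) ^ (r + 2) * ρ ^ (m + 1) / ρ := h6

lemma summable_u (r : ℕ) {ρ : ℝ} (hρ0 : 0 < ρ) (hρ1 : ρ < 1) :
    Summable (fun n : ℕ => (n : ℝ) ^ (r + 2) * ρ ^ n / ρ) :=
  (summable_pow_mul_geometric_of_norm_lt_one (R := ℝ) (r + 2)
    (r := ρ) (by rwa [Real.norm_eq_abs, abs_of_pos hρ0])).div_const ρ

lemma hasDerivAt_S (r : ℕ) {x : ℝ} (hx : |x| < 1) :
    HasDerivAt (fun z => ∑' n, c r n * z ^ n)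
      (∑' n, c r n * ((n : ℝ) * x ^ (n - 1))) x := by
  set ρ : ℝ := (|x| + 1) / 2 with hρdef
  have hx0 : 0 ≤ |x| := abs_nonneg x
  have hρ0 : 0 < ρ := by rw [hρdef]; linarith
  have hρ1 : ρ < 1 := by rw [hρdef]; linarith
  have hxρ : |x| < ρ := by rw [hρdef]; linarith
  refine hasDerivAt_tsum_of_isPreconnected (summable_u r hρ0 hρ1) Metric.isOpen_ball
    (convex_ball (0 : ℝ) ρ).isPreconnected
    (fun n y _ => (hasDerivAt_pow n y).const_mul (c r n))
    (fun n y hy => ?_) (Metric.mem_ball_self hρ0)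
    (summable_c_mul_pow r (by norm_num : |(0:ℝ)| < 1))
    (by rwa [Metric.mem_ball, dist_zero_right, Real.norm_eq_abs])
  rw [Metric.mem_ball, dist_zero_right, Real.norm_eq_abs] at hy
  exact deriv_bound r hρ0 hy.le n

lemma summable_deriv (r : ℕ) {x : ℝ} (hx : |x| < 1) :
    Summable (fun n => c r n * ((n : ℝ) * x ^ (n - 1))) := by
  set ρ : ℝ := (|x| + 1) / 2 with hρdef
  have hx0 : 0 ≤ |x| := abs_nonneg x
  have hρ0 : 0 < ρ := by rw [hρdef]; linarith
  have hρ1 : ρ < 1 := by rw [hρdef]; linarith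
  have hxρ : |x| < ρ := by rw [hρdef]; linarith
  exact Summable.of_norm_bounded (summable_u r hρ0 hρ1)
    (fun n => deriv_bound r hρ0 hxρ.le n)

lemma deriv_sum_eq (r : ℕ) {x : ℝ} (hx : |x| < 1) :
    (∑' n, c (r + 1) n * ((n : ℝ) * x ^ (n - 1)))
      = (∑' n, c r n * x ^ n) * (1 - x)⁻¹ := by
  have hsum := summable_deriv (r + 1) hx
  rw [Summable.tsum_eq_zero_add hsum]
  have h0 : c (r + 1) 0 * ((0 : ℕ) * x ^ (0 - 1)) = 0 := by
    simp
  rw [h0, zero_add]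
  have hterm : ∀ n : ℕ, c (r + 1) (n + 1) * (((n + 1 : ℕ) : ℝ) * x ^ n)
      = (∑ j ∈ Finset.range (n + 1), c r j) * x ^ n := by
    intro n
    rw [c_succ_succ]
    have hn : ((n : ℝ) + 1) ≠ 0 := by positivity
    push_cast
    field_simp
  have hshift : (∑' n : ℕ, c (r + 1) (n + 1) * (((n + 1 : ℕ) : ℝ) * x ^ ((n + 1) - 1)))
      = ∑' n : ℕ, (∑ j ∈ Finset.range (n + 1), c r j) * x ^ n := by
    refine tsum_congr fun n => ?_
    rw [Nat.add_sub_cancel]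
    exact hterm n
  rw [hshift]
  -- Cauchy product
  have hf : Summable (fun n => ‖c r n * x ^ n‖) := summable_norm_c_mul_pow r hx
  have hg : Summable (fun n : ℕ => ‖x ^ n‖) := by
    simpa [norm_pow, Real.norm_eq_abs] using
      summable_geometric_of_lt_one (abs_nonneg x) hx
  have hC := tsum_mul_tsum_eq_tsum_sum_range_of_summable_norm hf hg
  have hgeo : (∑' n : ℕ, x ^ n) = (1 - x)⁻¹ :=
    tsum_geometric_of_norm_lt_one (by rwa [Real.norm_eq_abs])
  rw [hgeo] at hC
  rw [hC]
  refine tsum_congr fun n => ?_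
  rw [Finset.sum_mul]
  refine Finset.sum_congr rfl fun k hk => ?_
  have hkn : k ≤ n := Nat.lt_succ_iff.mp (Finset.mem_range.mp hk)
  rw [mul_assoc, ← pow_add, Nat.add_sub_cancel' hkn]

lemma sum_at_zero (r : ℕ) : (∑' n, c (r + 1) n * (0 : ℝ) ^ n) = 0 := by
  rw [tsum_eq_single 0 (fun n hn => ?_)]
  · rw [c_succ_zero]; ring
  · rcases n with _ | m
    · exact absurd rfl hn
    · simp

/-- Constancy on a ball from vanishing derivative. -/
lemma const_on_ball {f : ℝ → ℝ} {R : ℝ} (hR : 0 < R)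
    (hf : ∀ y ∈ Metric.ball (0 : ℝ) R, HasDerivAt f 0 y) {x : ℝ}
    (hx : x ∈ Metric.ball (0 : ℝ) R) : f x = f 0 := by
  have h0 : ∀ y ∈ Metric.ball (0 : ℝ) R, HasFDerivAt f (0 : ℝ →L[ℝ] ℝ) y := by
    intro y hy
    have := (hf y hy).hasFDerivAt
    exact this.congr_fderiv (by ext; simp)
  refine (convex_ball (0 : ℝ) R).is_const_of_fderivWithin_eq_zero
    (fun y hy => ((h0 y hy).differentiableAt).differentiableWithinAt)
    (fun y hy => ?_) hx (Metric.mem_ball_self hR)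
  rw [fderivWithin_of_isOpen Metric.isOpen_ball hy]
  exact (h0 y hy).fderiv

lemma tsum_c_eq : ∀ (r : ℕ) {x : ℝ}, |x| < 1 →
    (∑' n, c r n * x ^ n) = (-Real.log (1 - x)) ^ r / (Nat.factorial r : ℝ)
  | 0, x, hx => by
      rw [tsum_eq_single 0 (fun n hn => ?_)]
      · rw [c_zero_zero]; simp
      · rcases n with _ | m
        · exact absurd rfl hn
        · rw [c_zero_succ]; ring
  | (r + 1), x, hx => by
      have IH : ∀ {y : ℝ}, |y| < 1 →
          (∑' n, c r n * y ^ n) = (-Real.log (1 - y)) ^ r / (Nat.factorial r : ℝ) :=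
        fun {y} hy => tsum_c_eq r hy
      set f : ℝ → ℝ := fun z => ∑' n, c (r + 1) n * z ^ n with hfdef
      set g : ℝ → ℝ := fun z =>
        (-Real.log (1 - z)) ^ (r + 1) / (Nat.factorial (r + 1) : ℝ) with hgdef
      have key : ∀ y ∈ Metric.ball (0 : ℝ) 1, HasDerivAt (fun z => f z - g z) 0 y := by
        intro y hy
        rw [Metric.mem_ball, dist_zero_right, Real.norm_eq_abs] at hy
        have h1y : (0 : ℝ) < 1 - y := by
          have := abs_lt.mp hy
          linarith [this.2]
        -- derivative of f
        have hdf : HasDerivAt f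
            ((-Real.log (1 - y)) ^ r / (Nat.factorial r : ℝ) * (1 - y)⁻¹) y := by
          have h := hasDerivAt_S (r + 1) hy
          rwa [deriv_sum_eq r hy, IH hy] at h
        -- derivative of g
        have hL : HasDerivAt (fun z => -Real.log (1 - z)) (1 - y)⁻¹ y := by
          have h1 : HasDerivAt (fun z : ℝ => 1 - z) (-1) y := by
            simpa using (hasDerivAt_id y).const_sub 1
          have h2 := (Real.hasDerivAt_log (ne_of_gt h1y)).comp y h1
          have h3 := h2.neg
          exact h3.congr_deriv (by field_simp)
        have hdg : HasDerivAt g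
            ((-Real.log (1 - y)) ^ r / (Nat.factorial r : ℝ) * (1 - y)⁻¹) y := by
          have h3 := (hL.pow (r + 1)).div_const (Nat.factorial (r + 1) : ℝ)
          refine h3.congr_deriv ?_
          rw [Nat.add_sub_cancel, Nat.factorial_succ]
          have hfac : (Nat.factorial r : ℝ) ≠ 0 := Nat.cast_ne_zero.2 (Nat.factorial_ne_zero r)
          push_cast
          field_simp
        have hsub := hdf.sub hdg
        rw [sub_self] at hsub
        exact hsub
      have hx1 : x ∈ Metric.ball (0 : ℝ) 1 := by
        rwa [Metric.mem_ball, dist_zero_right, Real.norm_eq_abs]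
      have hconst := const_on_ball one_pos key hx1
      have hf0 : f 0 = 0 := sum_at_zero r
      have hg0 : g 0 = 0 := by
        rw [hgdef]
        simp
      have : f x - g x = 0 := by
        rw [hconst, hf0, hg0]; ring
      have hfg : f x = g x := by linarith [this]
      exact hfg

lemma mpolylog_ones (r : ℕ) {x : ℝ} (hx : |x| < 1) :
    mpolylog (List.replicate r 1) x = (-Real.log (1 - x)) ^ r / (Nat.factorial r : ℝ) := by
  rw [mpolylog, List.reverse_replicate]
  exact tsum_c_eq r hx

/-- Identity theorem: if two power series agree on a punctured neighbourhood of `0`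
(and are summable there), the coefficients agree. -/
lemma coeff_eq_of_tsum_eq {a b : ℕ → ℝ} {δ : ℝ} (hδ : 0 < δ)
    (ha : ∀ t : ℝ, 0 < |t| → |t| < δ → Summable (fun n => a n * t ^ n))
    (hb : ∀ t : ℝ, 0 < |t| → |t| < δ → Summable (fun n => b n * t ^ n))
    (heq : ∀ t : ℝ, 0 < |t| → |t| < δ → (∑' n, a n * t ^ n) = ∑' n, b n * t ^ n) :
    a = b := by
  classical
  set p := FormalMultilinearSeries.ofScalars ℝ a with hp
  set q := FormalMultilinearSeries.ofScalars ℝ b with hq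
  have psum : ∀ y : ℝ, p.sum y = ∑' n, a n * y ^ n := fun y =>
    tsum_congr fun n => by
      rw [hp, FormalMultilinearSeries.ofScalars_apply_eq, smul_eq_mul]
  have qsum : ∀ y : ℝ, q.sum y = ∑' n, b n * y ^ n := fun y =>
    tsum_congr fun n => by
      rw [hq, FormalMultilinearSeries.ofScalars_apply_eq, smul_eq_mul]
  set t₀ : ℝ := δ / 2 with ht₀def
  have ht₀pos : 0 < t₀ := by rw [ht₀def]; linarith
  have ht₀abs : 0 < |t₀| := by rwa [abs_of_pos ht₀pos]
  have ht₀lt : |t₀| < δ := by rw [abs_of_pos ht₀pos, ht₀def]; linarith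
  -- radii are positive
  have hradius : ∀ (s : ℕ → ℝ), Summable (fun n => s n * t₀ ^ n) →
      (0 : ENNReal) < (FormalMultilinearSeries.ofScalars ℝ s).radius := by
    intro s hs
    have h0 := hs.tendsto_atTop_zero.norm
    rw [norm_zero] at h0
    obtain ⟨C, hC⟩ := h0.bddAbove_range
    have hle : (t₀.toNNReal : ENNReal) ≤ (FormalMultilinearSeries.ofScalars ℝ s).radius := by
      apply FormalMultilinearSeries.le_radius_of_bound _ C
      intro n
      have hmem : ‖s n * t₀ ^ n‖ ∈ Set.range (fun n => ‖s n * t₀ ^ n‖) := ⟨n, rfl⟩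
      have hCn := hC hmem
      rw [FormalMultilinearSeries.ofScalars_norm]
      rw [Real.coe_toNNReal _ ht₀pos.le]
      calc ‖s n‖ * t₀ ^ n = ‖s n * t₀ ^ n‖ := by
            rw [norm_mul, norm_pow, Real.norm_eq_abs t₀, abs_of_pos ht₀pos]
        _ ≤ C := hCn
    refine lt_of_lt_of_le ?_ hle
    rw [ENNReal.coe_pos, ← NNReal.coe_pos, Real.coe_toNNReal _ ht₀pos.le]
    exact ht₀pos
  have hpr : (0 : ENNReal) < p.radius := hradius a (ha t₀ ht₀abs ht₀lt)
  have hqr : (0 : ENNReal) < q.radius := hradius b (hb t₀ ht₀abs ht₀lt)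
  have hpf : HasFPowerSeriesAt p.sum p 0 :=
    (p.hasFPowerSeriesOnBall hpr).hasFPowerSeriesAt
  have hqf : HasFPowerSeriesAt q.sum q 0 :=
    (q.hasFPowerSeriesOnBall hqr).hasFPowerSeriesAt
  have hball : Metric.ball (0 : ℝ) δ ∈ nhds (0 : ℝ) := Metric.ball_mem_nhds _ hδ
  have hev : p.sum =ᶠ[nhdsWithin (0 : ℝ) {(0 : ℝ)}ᶜ] q.sum := by
    filter_upwards [self_mem_nhdsWithin, mem_nhdsWithin_of_mem_nhds hball] with y hy1 hy2
    have hy0 : y ≠ 0 := hy1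
    have hyabs : 0 < |y| := abs_pos.mpr hy0
    rw [Metric.mem_ball, dist_zero_right, Real.norm_eq_abs] at hy2
    rw [psum, qsum]
    exact heq y hyabs hy2
  have hne : (nhdsWithin (0 : ℝ) {(0 : ℝ)}ᶜ).NeBot := by infer_instance
  have h00 : p.sum 0 = q.sum 0 := by
    have h1 : Filter.Tendsto p.sum (nhdsWithin (0 : ℝ) {(0 : ℝ)}ᶜ) (nhds (p.sum 0)) :=
      hpf.continuousAt.continuousWithinAt
    have h2 : Filter.Tendsto p.sum (nhdsWithin (0 : ℝ) {(0 : ℝ)}ᶜ) (nhds (q.sum 0)) :=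
      (hqf.continuousAt.continuousWithinAt).congr' hev.symm
    exact tendsto_nhds_unique h1 h2
  have hev2 : p.sum =ᶠ[nhds (0 : ℝ)] q.sum := by
    filter_upwards [hball] with y hy
    by_cases hy0 : y = 0
    · rw [hy0]; exact h00
    · rw [Metric.mem_ball, dist_zero_right, Real.norm_eq_abs] at hy
      rw [psum, qsum]
      exact heq y (abs_pos.mpr hy0) hy
  have hpq : p = q := hpf.eq_formalMultilinearSeries_of_eventually hqf hev2
  exact (FormalMultilinearSeries.ofScalars_series_eq_iff (𝕜 := ℝ) ℝ a b).mp hpq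

end MPBAux

/-- If `B n = B_n^{(1,…,1)}` (r ones) are the multi-poly-Bernoulli numbers, defined by
`r! Li_{1,…,1}(1-e^{-t})/(e^t-1)^r = ∑_n B n · t^n/n!`, and `Br n = B_n^{(r)}` are the
Bernoulli numbers of order `r`, defined by `(t/(e^t-1))^r = ∑_n Br n · t^n/n!`,
then `B n = Br n` for all `n`. -/
theorem multiPolyBernoulli_ones_eq_higher_order (r : ℕ) (hr : 0 < r)
    (B Br : ℕ → ℝ) (ε : ℝ) (hε : 0 < ε)
    (hB : ∀ t : ℝ, 0 < |t| → |t| < ε →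
      (Nat.factorial r : ℝ) * mpolylog (List.replicate r 1) (1 - Real.exp (-t)) /
          (Real.exp t - 1) ^ r =
        ∑' n : ℕ, B n * t ^ n / (Nat.factorial n : ℝ))
    (hBr : ∀ t : ℝ, 0 < |t| → |t| < ε →
      (t / (Real.exp t - 1)) ^ r = ∑' n : ℕ, Br n * t ^ n / (Nat.factorial n : ℝ))
    (n : ℕ) :
    B n = Br n := by
  set δ : ℝ := min ε (1 / 2) with hδdef
  have hδ : 0 < δ := lt_min hε (by norm_num)
  -- main pointwise identity
  have hkey : ∀ t : ℝ, 0 < |t| → |t| < δ →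
      (Nat.factorial r : ℝ) * mpolylog (List.replicate r 1) (1 - Real.exp (-t)) /
        (Real.exp t - 1) ^ r = (t / (Real.exp t - 1)) ^ r := by
    intro t ht0 htδ
    have htε : |t| < ε := lt_of_lt_of_le htδ (min_le_left _ _)
    have ht12 : |t| < 1 / 2 := lt_of_lt_of_le htδ (min_le_right _ _)
    have hxabs : |1 - Real.exp (-t)| < 1 := by
      rw [abs_lt]
      constructor
      · have hlog : |t| < Real.log 2 := by
          have := Real.log_two_gt_d9
          linarith
        have hneg : -t < Real.log 2 := lt_of_le_of_lt (neg_le_abs t) hlog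
        have hexp : Real.exp (-t) < 2 := by
          calc Real.exp (-t) < Real.exp (Real.log 2) := Real.exp_lt_exp.2 hneg
            _ = 2 := Real.exp_log two_pos
        linarith
      · have := Real.exp_pos (-t)
        linarith
    have hml : mpolylog (List.replicate r 1) (1 - Real.exp (-t)) =
        t ^ r / (Nat.factorial r : ℝ) := by
      rw [MPBAux.mpolylog_ones r hxabs]
      have h1 : (1 : ℝ) - (1 - Real.exp (-t)) = Real.exp (-t) := by ring
      rw [h1, Real.log_exp, neg_neg]
    rw [hml]
    have hfac : (Nat.factorial r : ℝ) ≠ 0 := Nat.cast_ne_zero.2 (Nat.factorial_ne_zero r)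
    rw [mul_div_cancel₀ _ hfac, div_pow]
  -- both series are summable and equal
  have hb2 : ∀ t : ℝ, 0 < |t| → |t| < δ →
      (t / (Real.exp t - 1)) ^ r ≠ 0 := by
    intro t ht0 htδ
    have htne : t ≠ 0 := abs_pos.mp ht0
    have hexpne : Real.exp t - 1 ≠ 0 := by
      rw [sub_ne_zero]
      exact fun h => htne (Real.exp_injective (by rw [h, Real.exp_zero]))
    exact pow_ne_zero r (div_ne_zero htne hexpne)
  have hfun : ∀ (s : ℕ → ℝ) (t : ℝ),
      (fun m => s m * t ^ m / (Nat.factorial m : ℝ)) =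
        (fun m => (s m / (Nat.factorial m : ℝ)) * t ^ m) := by
    intro s t
    funext m
    ring
  have hBsum : ∀ t : ℝ, 0 < |t| → |t| < δ →
      Summable (fun m => (B m / (Nat.factorial m : ℝ)) * t ^ m) := by
    intro t ht0 htδ
    have htε : |t| < ε := lt_of_lt_of_le htδ (min_le_left _ _)
    have he : (∑' m : ℕ, (B m / (Nat.factorial m : ℝ)) * t ^ m) =
        (t / (Real.exp t - 1)) ^ r := by
      rw [← hfun, ← hB t ht0 htε, hkey t ht0 htδ]
    by_contra hns
    rw [tsum_eq_zero_of_not_summable hns] at he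
    exact hb2 t ht0 htδ he.symm
  have hBrsum : ∀ t : ℝ, 0 < |t| → |t| < δ →
      Summable (fun m => (Br m / (Nat.factorial m : ℝ)) * t ^ m) := by
    intro t ht0 htδ
    have htε : |t| < ε := lt_of_lt_of_le htδ (min_le_left _ _)
    have he : (∑' m : ℕ, (Br m / (Nat.factorial m : ℝ)) * t ^ m) =
        (t / (Real.exp t - 1)) ^ r := by
      rw [← hfun, ← hBr t ht0 htε]
    by_contra hns
    rw [tsum_eq_zero_of_not_summable hns] at he
    exact hb2 t ht0 htδ he.symm
  have heqsum : ∀ t : ℝ, 0 < |t| → |t| < δ →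
      (∑' m : ℕ, (B m / (Nat.factorial m : ℝ)) * t ^ m) =
        ∑' m : ℕ, (Br m / (Nat.factorial m : ℝ)) * t ^ m := by
    intro t ht0 htδ
    have htε : |t| < ε := lt_of_lt_of_le htδ (min_le_left _ _)
    rw [← hfun, ← hfun, ← hB t ht0 htε, ← hBr t ht0 htε, hkey t ht0 htδ]
  have hab := MPBAux.coeff_eq_of_tsum_eq hδ hBsum hBrsum heqsum
  have hn := congrFun hab n
  have hfacn : (Nat.factorial n : ℝ) ≠ 0 := Nat.cast_ne_zero.2 (Nat.factorial_ne_zero n)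
  exact (div_left_inj' hfacn).mp hn
end
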